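/- Let p ∈ ℝ[x,y], and suppose there exist sets B ⊂ A ⊂ ℝ² such that: B is bounded; for every t ∈ ℝ the set p⁻¹(t) ∩ A is either empty, contained in B, or homeomorphic to a closed segment with both endpoints in B; and the boundary of A contains a half-line. Then for every q ∈ ℝ[x,y] there exists v ∈ ℝ² with Jac(p,q)(v) = 0. -/

import Mathlib

open MvPolynomial

/-- The Jacobian determinant of the polynomial map `(p, q) : ℝ² → ℝ²`. -/
noncomputable def Jac (p q : MvPolynomial (Fin 2) ℝ) (v : Fin 2 → ℝ) : ℝ :=
  eval v (pderiv 0 p * pderiv 1 q - pderiv 1 p * pderiv 0 q)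

/-- Theorem 1 (glacial tongues). Let `p ∈ ℝ[x,y]` and suppose `B ⊆ A ⊆ ℝ²` satisfy:
`B` is bounded; for every `t` the set `p⁻¹(t) ∩ A` is empty, or contained in `B`, or
`p⁻¹(t) ∩ closure A` is homeomorphic to the segment `[0,1]` with both endpoints in `B`;
and the boundary of `A` contains a half-line. Then every `q ∈ ℝ[x,y]` has a point where
the Jacobian determinant of `(p,q)` vanishes. -/
noncomputable def evalD (p : MvPolynomial (Fin 2) ℝ) (v : Fin 2 → ℝ) : (Fin 2 → ℝ) →L[ℝ] ℝ :=
  ∑ i, eval v (pderiv i p) • (ContinuousLinearMap.proj i)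

lemma evalD_apply (p : MvPolynomial (Fin 2) ℝ) (v u : Fin 2 → ℝ) :
    evalD p v u = ∑ i, eval v (pderiv i p) * u i := by
  simp [evalD, ContinuousLinearMap.sum_apply]

lemma hasStrictFDerivAt_eval (p : MvPolynomial (Fin 2) ℝ) :
    ∀ v, HasStrictFDerivAt (fun x : Fin 2 → ℝ => eval x p) (evalD p v) v := by
  induction p using MvPolynomial.induction_on with
  | C a =>
      intro v
      have : evalD (C a : MvPolynomial (Fin 2) ℝ) v = 0 := by
        ext u; simp [evalD_apply]
      rw [this]
      simpa using hasStrictFDerivAt_const (E := Fin 2 → ℝ) a v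
  | add p q hp hq =>
      intro v
      have h := (hp v).add (hq v)
      have : evalD (p + q) v = evalD p v + evalD q v := by
        ext u; simp [evalD_apply, Finset.sum_add_distrib, add_mul]
      rw [this]
      simpa [Pi.add_def] using h
  | mul_X p i hp =>
      intro v
      have hproj : HasStrictFDerivAt (fun x : Fin 2 → ℝ => x i)
          (ContinuousLinearMap.proj (R := ℝ) (φ := fun _ : Fin 2 => ℝ) i) v :=
        (ContinuousLinearMap.proj (R := ℝ) (φ := fun _ : Fin 2 => ℝ) i).hasStrictFDerivAt
      have h := (hp v).mul hproj
      have heq : evalD (p * X i) v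
          = eval v p • (ContinuousLinearMap.proj i : (Fin 2 → ℝ) →L[ℝ] ℝ)
            + (v i) • evalD p v := by
        ext u
        simp only [evalD_apply, ContinuousLinearMap.add_apply, ContinuousLinearMap.smul_apply,
          ContinuousLinearMap.proj_apply, smul_eq_mul, Finset.mul_sum]
        rw [Fin.sum_univ_two, Fin.sum_univ_two]
        fin_cases i <;>
          simp [pderiv_mul, pderiv_X, Pi.single_apply] <;> ring
      rw [heq]
      have hfun : (fun x : Fin 2 → ℝ => eval x (p * X i)) = fun y => eval y p * y i := by
        funext y; simp
      rw [hfun]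
      exact h

lemma continuous_eval_poly (p : MvPolynomial (Fin 2) ℝ) :
    Continuous (fun x : Fin 2 → ℝ => eval x p) := by
  rw [continuous_iff_continuousAt]
  exact fun x => (hasStrictFDerivAt_eval p x).hasFDerivAt.continuousAt

lemma line_poly (p : MvPolynomial (Fin 2) ℝ) (v₀ w : Fin 2 → ℝ) :
    ∀ t : ℝ, Polynomial.eval t
        (MvPolynomial.aeval (fun i => Polynomial.C (v₀ i) + Polynomial.C (w i) * Polynomial.X) p)
      = eval (v₀ + t • w) p := by
  induction p using MvPolynomial.induction_on with
  | C a => intro t; simp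
  | add p q hp hq => intro t; simp [hp t, hq t]
  | mul_X p i hp =>
      intro t
      rw [map_mul, MvPolynomial.aeval_X, Polynomial.eval_mul, hp t, map_mul, eval_X]
      simp only [Pi.add_apply, Pi.smul_apply, smul_eq_mul, Polynomial.eval_add,
        Polynomial.eval_mul, Polynomial.eval_C, Polynomial.eval_X]
      ring

noncomputable def jacEquiv (a b c d : ℝ) (h : a * d - b * c ≠ 0) :
    (Fin 2 → ℝ) ≃ₗ[ℝ] ℝ × ℝ where
  toFun u := (a * u 0 + b * u 1, c * u 0 + d * u 1)
  map_add' u v := by simp [Pi.add_apply]; constructor <;> ring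
  map_smul' r u := by simp [Pi.smul_apply, smul_eq_mul]; constructor <;> ring
  invFun z := ![(d * z.1 - b * z.2) / (a * d - b * c), (a * z.2 - c * z.1) / (a * d - b * c)]
  left_inv u := by
    funext i
    fin_cases i <;> · simp only [Fin.zero_eta, Fin.mk_one, Matrix.cons_val_zero, Matrix.cons_val_one, Matrix.head_cons]
                      rw [div_eq_iff h]
                      ring
  right_inv z := by
    simp only [Matrix.cons_val_zero, Matrix.cons_val_one, Matrix.head_cons]
    have : ∀ x y : ℝ, (a * ((d * z.1 - b * z.2) / (a*d-b*c)) + b * ((a * z.2 - c * z.1) / (a*d-b*c)),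
      c * ((d * z.1 - b * z.2) / (a*d-b*c)) + d * ((a * z.2 - c * z.1) / (a*d-b*c))) = z := by
      intro x y
      ext <;> · dsimp only; rw [mul_div_assoc', mul_div_assoc', ← add_div, div_eq_iff h]; ring
    exact this 0 0

lemma local_inj (p q : MvPolynomial (Fin 2) ℝ) (y : Fin 2 → ℝ) (hJ : Jac p q y ≠ 0) :
    ∃ U : Set (Fin 2 → ℝ), IsOpen U ∧ y ∈ U ∧
      Set.InjOn (fun x => (eval x p, eval x q)) U := by
  set a := eval y (pderiv 0 p) with ha
  set b := eval y (pderiv 1 p) with hb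
  set c := eval y (pderiv 0 q) with hc
  set d := eval y (pderiv 1 q) with hd
  have hdet : a * d - b * c ≠ 0 := by
    have : Jac p q y = a * d - b * c := by simp [Jac, map_sub, map_mul, ha, hb, hc, hd]
    rwa [this] at hJ
  let e : (Fin 2 → ℝ) ≃L[ℝ] ℝ × ℝ := (jacEquiv a b c d hdet).toContinuousLinearEquiv
  have hF : HasStrictFDerivAt (fun x : Fin 2 → ℝ => (eval x p, eval x q))
      ((evalD p y).prod (evalD q y)) y :=
    HasStrictFDerivAt.prodMk (hasStrictFDerivAt_eval p y) (hasStrictFDerivAt_eval q y)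
  have hcoe : (e : (Fin 2 → ℝ) →L[ℝ] ℝ × ℝ) = (evalD p y).prod (evalD q y) := by
    apply ContinuousLinearMap.ext
    intro u
    have : e u = (a * u 0 + b * u 1, c * u 0 + d * u 1) := rfl
    rw [ContinuousLinearEquiv.coe_coe, this]
    simp [ContinuousLinearMap.prod_apply, evalD_apply, Fin.sum_univ_two, ha, hb, hc, hd]
  rw [← hcoe] at hF
  let ph := HasStrictFDerivAt.toOpenPartialHomeomorph (f := _) (hf := hF)
  refine ⟨ph.source, ph.open_source, HasStrictFDerivAt.mem_toOpenPartialHomeomorph_source (hf := hF), ?_⟩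
  have := ph.injOn
  rwa [show (ph : (Fin 2 → ℝ) → ℝ × ℝ) = fun x => (eval x p, eval x q) from
    HasStrictFDerivAt.toOpenPartialHomeomorph_coe (hf := hF)] at this

lemma arc_bound (p q : MvPolynomial (Fin 2) ℝ) (hJ : ∀ v, Jac p q v ≠ 0) (s : ℝ)
    (C : Set (Fin 2 → ℝ)) (hC : ∀ x ∈ C, eval x p = s)
    (h : Set.Icc (0:ℝ) 1 ≃ₜ C) :
    ∀ σ : Set.Icc (0:ℝ) 1, eval (h σ : Fin 2 → ℝ) q ≤
      max (eval (h ⟨0, by norm_num⟩ : Fin 2 → ℝ) q) (eval (h ⟨1, by norm_num⟩ : Fin 2 → ℝ) q) := by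
  by_contra hcon
  push_neg at hcon
  obtain ⟨σbad, hσbad⟩ := hcon
  set φ : ℝ → Set.Icc (0:ℝ) 1 := Set.projIcc 0 1 zero_le_one with hφ
  set g : ℝ → ℝ := fun t => eval ((h (φ t) : Fin 2 → ℝ)) q with hg
  have hgcont : Continuous g :=
    (continuous_eval_poly q).comp
      (continuous_subtype_val.comp (h.continuous.comp continuous_projIcc))
  have hgval : ∀ σ : Set.Icc (0:ℝ) 1, g σ.1 = eval (h σ : Fin 2 → ℝ) q := by
    intro σ
    have : φ σ.1 = σ := by
      rw [hφ, Set.projIcc_of_mem zero_le_one σ.2]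
    rw [hg]; simp only [this]
  obtain ⟨tm, htm_mem, htm_max'⟩ :=
    isCompact_Icc.exists_isMaxOn (Set.nonempty_Icc.2 zero_le_one)
      (hgcont.continuousOn (s := Set.Icc (0:ℝ) 1))
  have htm_max : ∀ t ∈ Set.Icc (0:ℝ) 1, g t ≤ g tm := fun t ht => htm_max' ht
  set c := g tm with hcdef
  have hbadmem : (σbad : ℝ) ∈ Set.Icc (0:ℝ) 1 := σbad.2
  have hcbig : max (g 0) (g 1) < c := by
    have h0 : g 0 = eval (h ⟨0, by norm_num⟩ : Fin 2 → ℝ) q := hgval ⟨0, by norm_num⟩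
    have h1 : g 1 = eval (h ⟨1, by norm_num⟩ : Fin 2 → ℝ) q := hgval ⟨1, by norm_num⟩
    have := htm_max _ hbadmem
    rw [hgval σbad] at this
    rw [h0, h1]
    exact lt_of_lt_of_le hσbad this
  have htm0 : tm ≠ 0 := by
    intro hh; rw [hh] at hcdef
    exact absurd hcbig (by rw [hcdef]; exact not_lt.2 (le_max_left _ _))
  have htm1 : tm ≠ 1 := by
    intro hh; rw [hh] at hcdef
    exact absurd hcbig (by rw [hcdef]; exact not_lt.2 (le_max_right _ _))
  have htmIoo : tm ∈ Set.Ioo (0:ℝ) 1 :=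
    ⟨lt_of_le_of_ne htm_mem.1 (Ne.symm htm0), lt_of_le_of_ne htm_mem.2 htm1⟩
  -- local injectivity at the max point
  obtain ⟨U, hUopen, hyU, hUinj⟩ := local_inj p q (h (φ tm) : Fin 2 → ℝ) (hJ _)
  set O : Set ℝ := {t : ℝ | ((h (φ t) : Fin 2 → ℝ)) ∈ U} ∩ Set.Ioo 0 1 with hO
  have hOopen : IsOpen O :=
    (hUopen.preimage (continuous_subtype_val.comp (h.continuous.comp continuous_projIcc))).inter
      isOpen_Ioo
  have htmO : tm ∈ O := ⟨hyU, htmIoo⟩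
  obtain ⟨ε, hε, hball⟩ := Metric.isOpen_iff.1 hOopen tm htmO
  set δ := ε / 2 with hδ
  have hδpos : 0 < δ := by positivity
  have hIsub : Set.Icc (tm - δ) (tm + δ) ⊆ O := by
    intro t ht
    apply hball
    rw [Metric.mem_ball, Real.dist_eq, abs_sub_lt_iff]
    constructor <;> [skip; skip] <;> · obtain ⟨h1, h2⟩ := ht; simp only [hδ] at h1 h2 ⊢; linarith
  have hIcc01 : Set.Icc (tm - δ) (tm + δ) ⊆ Set.Icc (0:ℝ) 1 := fun t ht =>
    Set.Ioo_subset_Icc_self (hIsub ht).2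
  -- injectivity of g on the small interval
  have hginj : Set.InjOn g (Set.Icc (tm - δ) (tm + δ)) := by
    intro t₁ ht₁ t₂ ht₂ heq
    have hx₁ : ((h (φ t₁) : Fin 2 → ℝ)) ∈ U := (hIsub ht₁).1
    have hx₂ : ((h (φ t₂) : Fin 2 → ℝ)) ∈ U := (hIsub ht₂).1
    have hps : ∀ t : ℝ, eval ((h (φ t) : Fin 2 → ℝ)) p = s := fun t => hC _ (h (φ t)).2
    have : ((h (φ t₁) : Fin 2 → ℝ)) = ((h (φ t₂) : Fin 2 → ℝ)) := by
      apply hUinj hx₁ hx₂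
      simp only [Prod.mk.injEq]
      exact ⟨by rw [hps t₁, hps t₂], heq⟩
    have hsub : h (φ t₁) = h (φ t₂) := Subtype.ext this
    have hφeq : φ t₁ = φ t₂ := h.injective hsub
    have h₁ : φ t₁ = ⟨t₁, hIcc01 ht₁⟩ := Set.projIcc_of_mem zero_le_one (hIcc01 ht₁)
    have h₂ : φ t₂ = ⟨t₂, hIcc01 ht₂⟩ := Set.projIcc_of_mem zero_le_one (hIcc01 ht₂)
    rw [h₁, h₂] at hφeq
    exact congrArg Subtype.val hφeq
  -- endpoints of the small interval have strictly smaller g values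
  have humem : tm - δ ∈ Set.Icc (tm - δ) (tm + δ) := by
    constructor <;> linarith
  have hvmem : tm + δ ∈ Set.Icc (tm - δ) (tm + δ) := by
    constructor <;> linarith
  have htmmem : tm ∈ Set.Icc (tm - δ) (tm + δ) := by
    constructor <;> linarith
  have hule : g (tm - δ) < c := by
    rcases lt_or_eq_of_le (htm_max _ (hIcc01 humem)) with hlt | heq
    · exact hlt
    · exfalso
      have := hginj humem htmmem heq
      linarith
  have hvle : g (tm + δ) < c := by
    rcases lt_or_eq_of_le (htm_max _ (hIcc01 hvmem)) with hlt | heq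
    · exact hlt
    · exfalso
      have := hginj hvmem htmmem heq
      linarith
  set m := (max (g (tm - δ)) (g (tm + δ)) + c) / 2 with hm
  have hmu : g (tm - δ) < m := by
    have := le_max_left (g (tm - δ)) (g (tm + δ))
    have := max_lt hule hvle
    rw [hm]; linarith
  have hmv : g (tm + δ) < m := by
    have := le_max_right (g (tm - δ)) (g (tm + δ))
    have := max_lt hule hvle
    rw [hm]; linarith
  have hmc : m < c := by
    have := max_lt hule hvle
    rw [hm]; linarith
  obtain ⟨t₁, ht₁mem, ht₁⟩ := intermediate_value_Icc (by linarith : tm - δ ≤ tm)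
    hgcont.continuousOn ⟨le_of_lt hmu, le_of_lt hmc⟩
  obtain ⟨t₂, ht₂mem, ht₂⟩ := intermediate_value_Icc' (by linarith : tm ≤ tm + δ)
    hgcont.continuousOn ⟨le_of_lt hmv, le_of_lt hmc⟩
  have ht₁ne : t₁ ≠ tm := fun hh => by rw [hh] at ht₁; linarith
  have ht₂ne : t₂ ≠ tm := fun hh => by rw [hh] at ht₂; linarith
  have ht₁I : t₁ ∈ Set.Icc (tm - δ) (tm + δ) := ⟨ht₁mem.1, le_trans ht₁mem.2 (by linarith)⟩
  have ht₂I : t₂ ∈ Set.Icc (tm - δ) (tm + δ) := ⟨le_trans (by linarith) ht₂mem.1, ht₂mem.2⟩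
  have : t₁ = t₂ := hginj ht₁I ht₂I (by rw [ht₁, ht₂])
  have ht₁lt : t₁ < tm := lt_of_le_of_ne ht₁mem.2 ht₁ne
  have ht₂gt : tm < t₂ := lt_of_le_of_ne ht₂mem.1 (Ne.symm ht₂ne)
  linarith [this ▸ ht₁lt]

lemma Jac_neg (p q : MvPolynomial (Fin 2) ℝ) (v : Fin 2 → ℝ) :
    Jac p (-q) v = -(Jac p q v) := by
  simp only [Jac, map_neg, mul_neg, map_sub, map_mul]
  ring


set_option maxHeartbeats 1000000 in
theorem jacobian_vanishes_of_glacial_tongue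
    (p : MvPolynomial (Fin 2) ℝ) (A B : Set (Fin 2 → ℝ))
    (hBA : B ⊆ A) (hBbdd : Bornology.IsBounded B)
    (hlevel : ∀ t : ℝ,
      ({x | eval x p = t} ∩ A = ∅) ∨
      ({x | eval x p = t} ∩ A ⊆ B) ∨
      (∃ h : Set.Icc (0:ℝ) 1 ≃ₜ ({x | eval x p = t} ∩ closure A : Set (Fin 2 → ℝ)),
        (h ⟨0, by norm_num⟩ : Fin 2 → ℝ) ∈ B ∧ (h ⟨1, by norm_num⟩ : Fin 2 → ℝ) ∈ B))
    (v₀ w : Fin 2 → ℝ) (hw : w ≠ 0)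
    (hL : {x | ∃ t : ℝ, 0 ≤ t ∧ x = v₀ + t • w} ⊆ frontier A) :
    ∀ q : MvPolynomial (Fin 2) ℝ, ∃ v : Fin 2 → ℝ, Jac p q v = 0 := by
  intro q
  by_contra hcon
  push_neg at hcon
  have hJ : ∀ v, Jac p q v ≠ 0 := hcon
  have hJn : ∀ v, Jac p (-q) v ≠ 0 := by
    intro v hv
    apply hJ v
    have := Jac_neg p q v
    rw [hv] at this
    linarith
  -- the half-line is in the closure of A
  have hlineclA : ∀ t : ℝ, 0 ≤ t → v₀ + t • w ∈ closure A := fun t ht =>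
    frontier_subset_closure (hL ⟨t, ht, rfl⟩)
  have hAne : A.Nonempty := by
    by_contra hAe
    rw [Set.not_nonempty_iff_eq_empty] at hAe
    have := hlineclA 0 le_rfl
    rw [hAe, closure_empty] at this
    exact this
  have hBne : B.Nonempty := by
    obtain ⟨y, hy⟩ := hAne
    rcases hlevel (eval y p) with he | hsub | ⟨hh, h0B, h1B⟩
    · exact absurd (Set.eq_empty_iff_forall_notMem.1 he y) (fun f => f ⟨rfl, hy⟩)
    · exact ⟨y, hsub ⟨rfl, hy⟩⟩
    · exact ⟨_, h0B⟩
  -- a bound on |p| and |q| over closure B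
  have hclBcompact : IsCompact (closure B) :=
    Metric.isCompact_of_isClosed_isBounded isClosed_closure hBbdd.closure
  have hGcont : Continuous (fun x : Fin 2 → ℝ => max |eval x p| |eval x q|) :=
    ((continuous_eval_poly p).abs).max ((continuous_eval_poly q).abs)
  obtain ⟨z, hzB, hzmax⟩ := hclBcompact.exists_isMaxOn hBne.closure hGcont.continuousOn
  set M := max |eval z p| |eval z q| with hM
  have hMB : ∀ b ∈ B, |eval b p| ≤ M ∧ |eval b q| ≤ M := by
    intro b hb
    have := hzmax (subset_closure hb)
    exact ⟨le_trans (le_max_left _ _) this, le_trans (le_max_right _ _) this⟩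
  -- bound on all of A
  have hA_bound : ∀ y ∈ A, |eval y p| ≤ M ∧ |eval y q| ≤ M := by
    intro y hy
    rcases hlevel (eval y p) with he | hsub | ⟨hh, h0B, h1B⟩
    · exact absurd (Set.eq_empty_iff_forall_notMem.1 he y) (fun f => f ⟨rfl, hy⟩)
    · exact hMB y (hsub ⟨rfl, hy⟩)
    · have hyC : y ∈ ({x | eval x p = eval y p} ∩ closure A : Set (Fin 2 → ℝ)) :=
        ⟨rfl, subset_closure hy⟩
      have hC : ∀ x ∈ ({x | eval x p = eval y p} ∩ closure A : Set (Fin 2 → ℝ)),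
          eval x p = eval y p := fun x hx => hx.1
      have hyval : (hh (hh.symm ⟨y, hyC⟩) : Fin 2 → ℝ) = y := by
        rw [Homeomorph.apply_symm_apply]
      have hp0 : eval (hh ⟨0, by norm_num⟩ : Fin 2 → ℝ) p = eval y p :=
        (hh ⟨0, by norm_num⟩).2.1
      have hpb : |eval y p| ≤ M := by
        rw [← hp0]
        exact (hMB _ h0B).1
      have hq1 := arc_bound p q hJ (eval y p) _ hC hh (hh.symm ⟨y, hyC⟩)
      rw [hyval] at hq1
      have hub : eval y q ≤ M := le_trans hq1 (max_le (le_trans (le_abs_self _) (hMB _ h0B).2)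
        (le_trans (le_abs_self _) (hMB _ h1B).2))
      have hq2 := arc_bound p (-q) hJn (eval y p) _ hC hh (hh.symm ⟨y, hyC⟩)
      rw [hyval] at hq2
      simp only [map_neg] at hq2
      have hlb : -M ≤ eval y q := by
        have h0 : -(eval (hh ⟨0, by norm_num⟩ : Fin 2 → ℝ) q) ≤ M :=
          le_trans (neg_le_abs _) (hMB _ h0B).2
        have h1 : -(eval (hh ⟨1, by norm_num⟩ : Fin 2 → ℝ) q) ≤ M :=
          le_trans (neg_le_abs _) (hMB _ h1B).2
        have := max_le h0 h1
        have h2 : -(eval y q) ≤ M := le_trans hq2 this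
        linarith
      exact ⟨hpb, abs_le.2 ⟨hlb, hub⟩⟩
  -- bound on closure of A
  have hclosed : IsClosed {x : Fin 2 → ℝ | |eval x p| ≤ M ∧ |eval x q| ≤ M} := by
    have h1 : IsClosed {x : Fin 2 → ℝ | |eval x p| ≤ M} :=
      isClosed_Iic.preimage ((continuous_eval_poly p).abs)
    have h2 : IsClosed {x : Fin 2 → ℝ | |eval x q| ≤ M} :=
      isClosed_Iic.preimage ((continuous_eval_poly q).abs)
    exact h1.inter h2
  have hcl_bound : ∀ y ∈ closure A, |eval y p| ≤ M ∧ |eval y q| ≤ M := fun y hy =>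
    closure_minimal hA_bound hclosed hy
  -- bound on the half-line, hence the line polynomials are constant
  have hline_bound : ∀ t : ℝ, 0 ≤ t →
      |eval (v₀ + t • w) p| ≤ M ∧ |eval (v₀ + t • w) q| ≤ M :=
    fun t ht => hcl_bound _ (hlineclA t ht)
  have key : ∀ r : MvPolynomial (Fin 2) ℝ,
      (∀ t : ℝ, 0 ≤ t → |eval (v₀ + t • w) r| ≤ M) →
      eval v₀ (pderiv 0 r) * w 0 + eval v₀ (pderiv 1 r) * w 1 = 0 := by
    intro r hbnd
    set P := MvPolynomial.aeval
      (fun i => Polynomial.C (v₀ i) + Polynomial.C (w i) * Polynomial.X) r with hP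
    have hPb : ∀ t : ℝ, 0 ≤ t → |Polynomial.eval t P| ≤ M := by
      intro t ht
      rw [hP, line_poly]
      exact hbnd t ht
    have hPdeg : P.degree ≤ 0 := by
      by_contra hd
      push_neg at hd
      have htt := Polynomial.abs_tendsto_atTop P hd
      obtain ⟨t, h1, h2⟩ := ((htt.eventually_gt_atTop M).and
        (Filter.eventually_ge_atTop (0:ℝ))).exists
      exact absurd (hPb t h2) (not_le.2 h1)
    have hPC : ∀ t : ℝ, Polynomial.eval t P = Polynomial.eval 0 P := by
      intro t
      rw [Polynomial.eq_C_of_degree_le_zero hPdeg]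
      simp
    have hfconst : (fun t : ℝ => eval (v₀ + t • w) r) = fun _ => Polynomial.eval 0 P := by
      funext t
      rw [← line_poly, ← hP, hPC]
    have hinner : HasDerivAt (fun t : ℝ => v₀ + t • w) w 0 := by
      have h1 : HasDerivAt (fun t : ℝ => t • w) ((1:ℝ) • w) 0 :=
        (hasDerivAt_id (0:ℝ)).smul_const w
      rw [one_smul] at h1
      exact h1.const_add v₀
    have houter := HasStrictFDerivAt.hasFDerivAt (hasStrictFDerivAt_eval r (v₀ + (0:ℝ) • w))
    have hder : HasDerivAt (fun t : ℝ => eval (v₀ + t • w) r)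
        (evalD r (v₀ + (0:ℝ) • w) w) 0 := by have := houter.comp_hasDerivAt 0 hinner; exact this
    rw [hfconst] at hder
    have hzero := hder.unique (hasDerivAt_const 0 _)
    rw [zero_smul, add_zero] at hzero
    have hsum : (∑ i, eval v₀ (pderiv i r) * w i) = 0 := by
      rw [← evalD_apply, hzero]
    rw [Fin.sum_univ_two] at hsum
    linarith
  have hp_eq := key p (fun t ht => (hline_bound t ht).1)
  have hq_eq := key q (fun t ht => (hline_bound t ht).2)
  -- conclude that the Jacobian vanishes at v₀
  have hwex : w 0 ≠ 0 ∨ w 1 ≠ 0 := by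
    by_contra hc
    push_neg at hc
    apply hw
    funext i
    fin_cases i
    · exact hc.1
    · exact hc.2
  have hJv₀ : Jac p q v₀ = 0 := by
    have hJform : Jac p q v₀ = eval v₀ (pderiv 0 p) * eval v₀ (pderiv 1 q)
        - eval v₀ (pderiv 1 p) * eval v₀ (pderiv 0 q) := by
      simp [Jac, map_sub, map_mul]
    rw [hJform]
    set a := eval v₀ (pderiv 0 p)
    set b := eval v₀ (pderiv 1 p)
    set c := eval v₀ (pderiv 0 q)
    set d := eval v₀ (pderiv 1 q)
    rcases hwex with h0 | h1
    · have : (a * d - b * c) * w 0 = d * (a * w 0 + b * w 1) - b * (c * w 0 + d * w 1) := by ring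
      rw [hp_eq, hq_eq] at this
      simp only [mul_zero, sub_zero] at this
      exact (mul_eq_zero.1 this).resolve_right h0
    · have : (a * d - b * c) * w 1 = a * (c * w 0 + d * w 1) - c * (a * w 0 + b * w 1) := by ring
      rw [hp_eq, hq_eq] at this
      simp only [mul_zero, sub_zero] at this
      exact (mul_eq_zero.1 this).resolve_right h1
  exact hJ v₀ hJv₀
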